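/- Let α > 0, k ∈ ℝ, and let U: ℝ → M₃(ℂ) be a continuous matrix-valued function with ∫_{−∞}^{∞} ‖U(x)‖ dx < ∞. Then there exists a unique bounded continuous function X: ℝ → M₃(ℂ) satisfying the Volterra integral equation X(x) = I₃ − ∫ₓ^∞ e^{(ik(x−y)/(12α))Σ}·U(y)·X(y)·e^{−(ik(x−y)/(12α))Σ} dy for all x ∈ ℝ. -/

import Mathlib

open Complex MeasureTheory

/-- `e^{wΣ}` for `Σ = diag(−2,1,1)`. -/
noncomputable def expSigma (w : ℂ) : Matrix (Fin 3) (Fin 3) ℂ :=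
  Matrix.diagonal ![Complex.exp (-2 * w), Complex.exp w, Complex.exp w]

namespace Stmt2Aux

open Set Function Filter Topology

-- generic scalar lemmas about an integrable nonneg continuous weight u
variable {u : ℝ → ℝ} (hu : Integrable u) (hc : Continuous u) (hpos : ∀ y, 0 ≤ u y)

noncomputable def phi (u : ℝ → ℝ) (x : ℝ) : ℝ := ∫ y in Ioi x, u y

include hu in
theorem phi_eq (x : ℝ) : phi u x = (∫ y, u y) - ∫ y in Iic x, u y := by
  rw [phi, eq_sub_iff_add_eq, add_comm, intervalIntegral.integral_Iic_add_Ioi hu.integrableOn hu.integrableOn]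

include hu in
theorem Iic_eq (x : ℝ) : (∫ y in Iic x, u y) = (∫ y in Iic 0, u y) + ∫ t in (0:ℝ)..x, u t := by
  rw [← intervalIntegral.integral_Iic_sub_Iic hu.integrableOn hu.integrableOn]; ring

include hu in
theorem continuous_phi : Continuous (phi u) := by
  have : Continuous fun x => ∫ t in (0:ℝ)..x, u t :=
    intervalIntegral.continuous_primitive (fun a b => hu.intervalIntegrable) 0
  have h2 : Continuous fun x => ∫ y in Iic x, u y :=
    (continuous_const.add this).congr fun x => (Iic_eq hu x).symm
  exact (continuous_const.sub h2).congr fun x => (phi_eq hu x).symm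

include hu hc in
theorem hasDerivAt_phi (x : ℝ) : HasDerivAt (phi u) (-(u x)) x := by
  have h1 : HasDerivAt (fun t => ∫ s in (0:ℝ)..t, u s) (u x) x :=
    intervalIntegral.integral_hasDerivAt_right hu.intervalIntegrable
      hc.stronglyMeasurable.stronglyMeasurableAtFilter hc.continuousAt
  have h2 : HasDerivAt (phi u) (0 - (0 + u x)) x := by
    apply HasDerivAt.congr_of_eventuallyEq ((hasDerivAt_const x (∫ y, u y)).sub
      ((hasDerivAt_const x (∫ y in Iic 0, u y)).add h1))
    filter_upwards with t
    rw [phi_eq hu, Iic_eq hu]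
    rfl
  simpa using h2

include hu hpos in
theorem phi_nonneg (x : ℝ) : 0 ≤ phi u x :=
  integral_nonneg fun y => hpos y

include hu hpos in
theorem phi_le (x : ℝ) : phi u x ≤ ∫ y, u y :=
  setIntegral_le_integral hu (Filter.Eventually.of_forall hpos)

include hu hc hpos in
theorem phi_tendsto : Tendsto (phi u) atTop (𝓝 0) := by
  have h1 : Tendsto (fun b => ∫ t in (0:ℝ)..b, u t) atTop (𝓝 (∫ y in Ioi 0, u y)) :=
    intervalIntegral_tendsto_integral_Ioi 0 hu.integrableOn tendsto_id
  have h2 : ∀ b, phi u b = (∫ y in Ioi 0, u y) - ∫ t in (0:ℝ)..b, u t := by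
    intro b
    have := phi_eq hu b
    rw [Iic_eq hu b] at this
    rw [this, show (∫ y in Ioi (0:ℝ), u y) = phi u 0 from rfl, phi_eq hu 0]
    ring
  have h3 : Tendsto (fun b => (∫ y in Ioi (0:ℝ), u y) - ∫ t in (0:ℝ)..b, u t) atTop (𝓝 0) := by
    have := tendsto_const_nhds (x := (∫ y in Ioi (0:ℝ), u y)) (f := atTop (α := ℝ)) |>.sub h1
    simpa using this
  exact h3.congr fun b => (h2 b).symm

include hu hc hpos in
theorem integrable_phi_pow_mul (n : ℕ) : Integrable fun y => phi u y ^ n * u y := by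
  apply Integrable.bdd_mul (c := (∫ y, u y) ^ n) hu
    (((continuous_phi hu).pow n).aestronglyMeasurable)
  filter_upwards with y
  rw [Real.norm_eq_abs, Pi.pow_apply, _root_.abs_of_nonneg (pow_nonneg (phi_nonneg hu hpos y) n)]
  exact pow_le_pow_left₀ (phi_nonneg hu hpos y) (phi_le hu hpos y) n

include hu hc hpos in
theorem integral_u_phi_pow (n : ℕ) (x : ℝ) :
    ∫ y in Ioi x, phi u y ^ n * u y = phi u x ^ (n + 1) / (n + 1) := by
  have hderiv : ∀ y ∈ Ici x, HasDerivAt (fun t => -(phi u t ^ (n+1) / (n+1)))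
      (phi u y ^ n * u y) y := by
    intro y _
    have h1 : HasDerivAt (fun t => phi u t ^ (n+1)) ((n+1 : ℕ) * phi u y ^ n * (-(u y))) y :=
      (hasDerivAt_phi hu hc y).pow (n+1)
    have h2 := (h1.div_const ((n:ℝ)+1)).neg
    refine h2.congr_deriv ?_
    push_cast
    field_simp
  have hint : IntegrableOn (fun y => phi u y ^ n * u y) (Ioi x) :=
    (integrable_phi_pow_mul hu hc hpos n).integrableOn
  have htend : Tendsto (fun t => -(phi u t ^ (n+1) / (n+1))) atTop (𝓝 0) := by
    have := (((phi_tendsto hu hc hpos).pow (n+1)).div_const ((n:ℝ)+1)).neg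
    simpa using this
  have := integral_Ioi_of_hasDerivAt_of_tendsto' hderiv hint htend
  rw [this]; push_cast; ring

-- matrix part
attribute [local instance] Matrix.normedAddCommGroup

abbrev M3 := Matrix (Fin 3) (Fin 3) ℂ

noncomputable def s3 : Fin 3 → ℂ := ![-2, 1, 1]

theorem expSigma_eq (w : ℂ) : expSigma w = Matrix.diagonal fun i => Complex.exp (s3 i * w) := by
  ext i j
  fin_cases i <;> fin_cases j <;> simp [expSigma, s3, Matrix.diagonal] <;> ring_nf

theorem sandwich_entry (w : ℂ) (A : M3) (i j : Fin 3) :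
    (expSigma w * A * expSigma (-w)) i j
      = Complex.exp (s3 i * w) * A i j * Complex.exp (s3 j * (-w)) := by
  rw [expSigma_eq, expSigma_eq, Matrix.mul_diagonal, Matrix.diagonal_mul]

theorem s3_real (i : Fin 3) : ∃ r : ℝ, s3 i = (r : ℂ) := by
  fin_cases i
  · exact ⟨-2, by simp [s3]⟩
  · exact ⟨1, by simp [s3]⟩
  · exact ⟨1, by simp [s3]⟩

theorem abs_exp_s3 (i : Fin 3) (r : ℝ) : ‖Complex.exp (s3 i * ((r : ℂ) * I))‖ = 1 := by
  obtain ⟨a, ha⟩ := s3_real i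
  rw [ha, Complex.norm_exp]
  simp [Complex.mul_re]

theorem wfun_real (α k x y : ℝ) :
    Complex.I * k * ((x : ℂ) - (y : ℂ)) / (12 * α) = ((k * (x - y) / (12 * α) : ℝ) : ℂ) * I := by
  push_cast
  ring

theorem abs_exp_wfun (α k x y : ℝ) (i : Fin 3) :
    ‖Complex.exp (s3 i * (Complex.I * k * ((x : ℂ) - (y : ℂ)) / (12 * α)))‖ = 1 := by
  rw [wfun_real]; exact abs_exp_s3 i _

theorem abs_exp_wfun_neg (α k x y : ℝ) (i : Fin 3) :
    ‖Complex.exp (s3 i * (-(Complex.I * k * ((x : ℂ) - (y : ℂ)) / (12 * α))))‖ = 1 := by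
  have : -(Complex.I * k * ((x : ℂ) - (y : ℂ)) / (12 * α))
      = Complex.I * k * ((y : ℂ) - (x : ℂ)) / (12 * α) := by ring
  rw [this, wfun_real]; exact abs_exp_s3 i _

section WithU

variable (U : ℝ → M3)

noncomputable def uw (y : ℝ) : ℝ := ∑ i : Fin 3, ∑ j : Fin 3, ‖U y i j‖

theorem uw_nonneg (y : ℝ) : 0 ≤ uw U y :=
  Finset.sum_nonneg fun _ _ => Finset.sum_nonneg fun _ _ => norm_nonneg _

theorem uw_cont (hU : Continuous U) : Continuous (uw U) := by
  unfold uw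
  apply continuous_finset_sum _ fun i _ => continuous_finset_sum _ fun j _ => ?_
  exact continuous_norm.comp (hU.matrix_elem i j)

theorem uw_int (hUint : ∀ i j : Fin 3, Integrable fun x => U x i j) : Integrable (uw U) := by
  unfold uw
  apply integrable_finset_sum _ fun i _ => integrable_finset_sum _ fun j _ => ?_
  simpa using (hUint i j).norm

theorem mul_entry_bound (y : ℝ) (V : M3) (i j : Fin 3) :
    ‖(U y * V) i j‖ ≤ uw U y * ‖V‖ := by
  rw [Matrix.mul_apply]
  refine (norm_sum_le _ _).trans ?_
  have h1 : ∀ l : Fin 3, ‖U y i l * V l j‖ ≤ ‖U y i l‖ * ‖V‖ := by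
    intro l
    rw [norm_mul]
    exact mul_le_mul_of_nonneg_left (V.norm_entry_le_entrywise_sup_norm) (norm_nonneg _)
  refine (Finset.sum_le_sum fun l _ => h1 l).trans ?_
  rw [← Finset.sum_mul]
  apply mul_le_mul_of_nonneg_right _ (norm_nonneg _)
  calc ∑ l : Fin 3, ‖U y i l‖
      ≤ ∑ i' : Fin 3, ∑ l : Fin 3, ‖U y i' l‖ := by
        exact Finset.single_le_sum (f := fun i' => ∑ l : Fin 3, ‖U y i' l‖)
          (fun i' _ => Finset.sum_nonneg fun _ _ => norm_nonneg _) (Finset.mem_univ i)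
    _ = uw U y := rfl

theorem sandwich_entry_bound (α k x y : ℝ) (V : M3) (i j : Fin 3) :
    ‖(expSigma (Complex.I * k * ((x : ℂ) - (y : ℂ)) / (12 * α)) * (U y * V) *
        expSigma (-(Complex.I * k * ((x : ℂ) - (y : ℂ)) / (12 * α)))) i j‖ ≤ uw U y * ‖V‖ := by
  rw [sandwich_entry, norm_mul, norm_mul, abs_exp_wfun, abs_exp_wfun_neg, one_mul, mul_one]
  exact mul_entry_bound U y V i j

end WithU

theorem continuous_integral_Ioi {h : ℝ → ℂ} (hh : Integrable h) :
    Continuous fun x => ∫ y in Ioi x, h y := by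
  have hIic : ∀ x : ℝ, (∫ y in Iic x, h y) = (∫ y in Iic 0, h y) + ∫ t in (0:ℝ)..x, h t := by
    intro x
    rw [← intervalIntegral.integral_Iic_sub_Iic hh.integrableOn hh.integrableOn]; ring
  have h1 : Continuous fun x => ∫ t in (0:ℝ)..x, h t :=
    intervalIntegral.continuous_primitive (fun a b => hh.intervalIntegrable) 0
  have h2 : Continuous fun x => ∫ y in Iic x, h y :=
    (continuous_const.add h1).congr fun x => (hIic x).symm
  have h3 : ∀ x : ℝ, (∫ y in Ioi x, h y) = (∫ y, h y) - ∫ y in Iic x, h y := by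
    intro x
    rw [eq_sub_iff_add_eq, add_comm,
      intervalIntegral.integral_Iic_add_Ioi hh.integrableOn hh.integrableOn]
  exact (continuous_const.sub h2).congr fun x => (h3 x).symm

section Op

variable (α k : ℝ) (U : ℝ → M3)

noncomputable def TX (X : ℝ → M3) (x : ℝ) : M3 :=
  1 - Matrix.of fun i j =>
    ∫ y in Set.Ioi x,
      (expSigma (Complex.I * k * ((x : ℂ) - (y : ℂ)) / (12 * α)) * (U y * X y) *
        expSigma (-(Complex.I * k * ((x : ℂ) - (y : ℂ)) / (12 * α)))) i j

variable {U}
variable (hU : Continuous U) (hUint : ∀ i j : Fin 3, Integrable fun x => U x i j)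

include hU hUint in
theorem integrand_integrable {X : ℝ → M3} (hX : Continuous X) {B : ℝ} (hXB : ∀ y, ‖X y‖ ≤ B)
    (x : ℝ) (i j : Fin 3) :
    Integrable (fun y : ℝ =>
      (expSigma (Complex.I * k * ((x : ℂ) - (y : ℂ)) / (12 * α)) * (U y * X y) *
        expSigma (-(Complex.I * k * ((x : ℂ) - (y : ℂ)) / (12 * α)))) i j) := by
  have hA : Continuous fun y => (U y * X y) i j := (hU.matrix_mul hX).matrix_elem i j
  have hw : Continuous fun y : ℝ => Complex.I * k * ((x : ℂ) - (y : ℂ)) / (12 * α) := by fun_prop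
  have hcont : Continuous fun y : ℝ =>
      (expSigma (Complex.I * k * ((x : ℂ) - (y : ℂ)) / (12 * α)) * (U y * X y) *
        expSigma (-(Complex.I * k * ((x : ℂ) - (y : ℂ)) / (12 * α)))) i j := by
    apply Continuous.congr (f := fun y : ℝ =>
      Complex.exp (s3 i * (Complex.I * k * ((x : ℂ) - (y : ℂ)) / (12 * α))) * (U y * X y) i j *
        Complex.exp (s3 j * (-(Complex.I * k * ((x : ℂ) - (y : ℂ)) / (12 * α)))))
    · exact ((Complex.continuous_exp.comp (continuous_const.mul hw)).mul hA).mul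
        (Complex.continuous_exp.comp (continuous_const.mul hw.neg))
    · intro y; rw [sandwich_entry]
  apply Integrable.mono' ((uw_int U hUint).mul_const B) hcont.aestronglyMeasurable
  filter_upwards with y
  refine (sandwich_entry_bound U α k x y (X y) i j).trans ?_
  exact mul_le_mul_of_nonneg_left (hXB y) (uw_nonneg U y)

end Op

section Op2

variable {α k : ℝ} {U : ℝ → M3}
variable (hU : Continuous U) (hUint : ∀ i j : Fin 3, Integrable fun x => U x i j)

theorem integrand_factor (x y : ℝ) (A : M3) (i j : Fin 3) :
    (expSigma (Complex.I * k * ((x : ℂ) - (y : ℂ)) / (12 * α)) * A *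
        expSigma (-(Complex.I * k * ((x : ℂ) - (y : ℂ)) / (12 * α)))) i j =
      (Complex.exp (s3 i * (Complex.I * k / (12 * α) * x)) *
        Complex.exp (-(s3 j * (Complex.I * k / (12 * α) * x)))) *
      (Complex.exp (-(s3 i * (Complex.I * k / (12 * α) * y))) * A i j *
        Complex.exp (s3 j * (Complex.I * k / (12 * α) * y))) := by
  rw [sandwich_entry]
  have h1 : s3 i * (Complex.I * k * ((x : ℂ) - (y : ℂ)) / (12 * α)) =
      s3 i * (Complex.I * k / (12 * α) * x) + -(s3 i * (Complex.I * k / (12 * α) * y)) := by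
    ring
  have h2 : s3 j * (-(Complex.I * k * ((x : ℂ) - (y : ℂ)) / (12 * α))) =
      -(s3 j * (Complex.I * k / (12 * α) * x)) + s3 j * (Complex.I * k / (12 * α) * y) := by
    ring
  rw [h1, h2, Complex.exp_add, Complex.exp_add]
  ring

include hU hUint in
theorem gfun_integrable {X : ℝ → M3} (hX : Continuous X) {B : ℝ} (hXB : ∀ y, ‖X y‖ ≤ B)
    (i j : Fin 3) :
    Integrable (fun y : ℝ =>
      Complex.exp (-(s3 i * (Complex.I * k / (12 * α) * y))) * (U y * X y) i j *
        Complex.exp (s3 j * (Complex.I * k / (12 * α) * y))) := by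
  have hA : Continuous fun y => (U y * X y) i j := (hU.matrix_mul hX).matrix_elem i j
  have hw : Continuous fun y : ℝ => Complex.I * k / (12 * α) * y := by fun_prop
  have hcont : Continuous fun y : ℝ =>
      Complex.exp (-(s3 i * (Complex.I * k / (12 * α) * y))) * (U y * X y) i j *
        Complex.exp (s3 j * (Complex.I * k / (12 * α) * y)) :=
    ((Complex.continuous_exp.comp (continuous_const.mul hw).neg).mul hA).mul
      (Complex.continuous_exp.comp (continuous_const.mul hw))
  apply Integrable.mono' ((uw_int U hUint).mul_const B) hcont.aestronglyMeasurable
  filter_upwards with y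
  have habs1 : ‖Complex.exp (-(s3 i * (Complex.I * k / (12 * α) * y)))‖ = 1 := by
    have : -(s3 i * (Complex.I * k / (12 * α) * (y : ℂ))) =
        s3 i * (Complex.I * k * (((0:ℝ) : ℂ) - (y : ℂ)) / (12 * α)) := by push_cast; ring
    rw [this]; exact abs_exp_wfun α k 0 y i
  have habs2 : ‖Complex.exp (s3 j * (Complex.I * k / (12 * α) * y))‖ = 1 := by
    have : s3 j * (Complex.I * k / (12 * α) * (y : ℂ)) =
        s3 j * (Complex.I * k * (((y:ℝ) : ℂ) - ((0:ℝ) : ℂ)) / (12 * α)) := by push_cast; ring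
    rw [this]; exact abs_exp_wfun α k y 0 j
  rw [norm_mul, norm_mul, habs1, habs2, one_mul, mul_one]
  refine (mul_entry_bound U y (X y) i j).trans ?_
  exact mul_le_mul_of_nonneg_left (hXB y) (uw_nonneg U y)

include hU hUint in
theorem TX_entry_factor {X : ℝ → M3} (hX : Continuous X) {B : ℝ} (hXB : ∀ y, ‖X y‖ ≤ B)
    (x : ℝ) (i j : Fin 3) :
    (∫ y in Set.Ioi x,
      (expSigma (Complex.I * k * ((x : ℂ) - (y : ℂ)) / (12 * α)) * (U y * X y) *
        expSigma (-(Complex.I * k * ((x : ℂ) - (y : ℂ)) / (12 * α)))) i j) =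
      (Complex.exp (s3 i * (Complex.I * k / (12 * α) * x)) *
        Complex.exp (-(s3 j * (Complex.I * k / (12 * α) * x)))) *
      ∫ y in Set.Ioi x,
        Complex.exp (-(s3 i * (Complex.I * k / (12 * α) * y))) * (U y * X y) i j *
          Complex.exp (s3 j * (Complex.I * k / (12 * α) * y)) := by
  rw [← integral_const_mul]
  apply integral_congr_ae
  filter_upwards with y
  exact integrand_factor x y (U y * X y) i j

include hU hUint in
theorem TX_cont {X : ℝ → M3} (hX : Continuous X) {B : ℝ} (hXB : ∀ y, ‖X y‖ ≤ B) :
    Continuous (TX α k U X) := by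
  unfold TX
  apply Continuous.sub continuous_const
  apply continuous_matrix
  intro i j
  refine Continuous.congr (f := fun x : ℝ =>
      (Complex.exp (s3 i * (Complex.I * k / (12 * α) * x)) *
        Complex.exp (-(s3 j * (Complex.I * k / (12 * α) * x)))) *
      ∫ y in Set.Ioi x,
        Complex.exp (-(s3 i * (Complex.I * k / (12 * α) * y))) * (U y * X y) i j *
          Complex.exp (s3 j * (Complex.I * k / (12 * α) * y))) ?_
    fun x => (TX_entry_factor hU hUint hX hXB x i j).symm
  have hw : Continuous fun x : ℝ => Complex.I * k / (12 * α) * x := by fun_prop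
  exact ((Complex.continuous_exp.comp (continuous_const.mul hw)).mul
    (Complex.continuous_exp.comp (continuous_const.mul hw).neg)).mul
    (continuous_integral_Ioi (gfun_integrable hU hUint hX hXB i j))

end Op2

section Op3

variable {α k : ℝ} {U : ℝ → M3}
variable (hU : Continuous U) (hUint : ∀ i j : Fin 3, Integrable fun x => U x i j)

include hU hUint in
theorem TX_norm_le {X : ℝ → M3} (hX : Continuous X) {B : ℝ} (hXB : ∀ y, ‖X y‖ ≤ B) (x : ℝ) :
    ‖TX α k U X x‖ ≤ ‖(1 : M3)‖ + (∫ y, uw U y) * B := by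
  have hB : 0 ≤ B := le_trans (norm_nonneg _) (hXB 0)
  have hμB : 0 ≤ (∫ y, uw U y) * B :=
    mul_nonneg (integral_nonneg (uw_nonneg U)) hB
  refine (norm_sub_le _ _).trans ?_
  gcongr
  rw [Matrix.norm_le_iff hμB]
  intro i j
  show ‖∫ y in Set.Ioi x,
      (expSigma (Complex.I * k * ((x : ℂ) - (y : ℂ)) / (12 * α)) * (U y * X y) *
        expSigma (-(Complex.I * k * ((x : ℂ) - (y : ℂ)) / (12 * α)))) i j‖ ≤ _
  have hbd : ‖∫ y in Set.Ioi x,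
      (expSigma (Complex.I * k * ((x : ℂ) - (y : ℂ)) / (12 * α)) * (U y * X y) *
        expSigma (-(Complex.I * k * ((x : ℂ) - (y : ℂ)) / (12 * α)))) i j‖ ≤
        ∫ y in Set.Ioi x, uw U y * B := by
    refine norm_integral_le_of_norm_le (((uw_int U hUint).mul_const B).integrableOn) ?_
    filter_upwards with y
    exact (sandwich_entry_bound U α k x y (X y) i j).trans
      (mul_le_mul_of_nonneg_left (hXB y) (uw_nonneg U y))
  refine hbd.trans ?_
  rw [← integral_mul_const]
  apply setIntegral_le_integral ((uw_int U hUint).mul_const B)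
  filter_upwards with y
  exact mul_nonneg (uw_nonneg U y) hB

include hU hUint in
theorem TX_diff_norm_le {X X' : ℝ → M3} (hX : Continuous X) (hX' : Continuous X')
    {B B' : ℝ} (hXB : ∀ y, ‖X y‖ ≤ B) (hXB' : ∀ y, ‖X' y‖ ≤ B')
    {b : ℝ → ℝ} (hXb : ∀ y, ‖X y - X' y‖ ≤ b y)
    (hub : Integrable fun y => uw U y * b y) (x : ℝ) :
    ‖TX α k U X x - TX α k U X' x‖ ≤ ∫ y in Set.Ioi x, uw U y * b y := by
  have hbnn : 0 ≤ ∫ y in Set.Ioi x, uw U y * b y := by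
    apply setIntegral_nonneg measurableSet_Ioi
    intro y _
    exact mul_nonneg (uw_nonneg U y) ((norm_nonneg _).trans (hXb y))
  have key : TX α k U X x - TX α k U X' x = Matrix.of fun i j =>
      ∫ y in Set.Ioi x,
        (expSigma (Complex.I * k * ((x : ℂ) - (y : ℂ)) / (12 * α)) * (U y * (X' y - X y)) *
          expSigma (-(Complex.I * k * ((x : ℂ) - (y : ℂ)) / (12 * α)))) i j := by
    unfold TX
    rw [sub_sub_sub_cancel_left]
    ext i j
    rw [Matrix.sub_apply]
    simp only [Matrix.of_apply]
    rw [← integral_sub ((integrand_integrable α k hU hUint hX' hXB' x i j).integrableOn)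
      ((integrand_integrable α k hU hUint hX hXB x i j).integrableOn)]
    apply integral_congr_ae
    filter_upwards with y
    rw [sandwich_entry, sandwich_entry, sandwich_entry]
    have : (U y * X' y) i j - (U y * X y) i j = (U y * (X' y - X y)) i j := by
      rw [← Matrix.sub_apply, ← mul_sub]
    rw [← this]
    ring
  rw [key]
  rw [Matrix.norm_le_iff hbnn]
  intro i j
  refine norm_integral_le_of_norm_le (hub.integrableOn (s := Set.Ioi x)) ?_
  filter_upwards with y
  refine (sandwich_entry_bound U α k x y (X' y - X y) i j).trans ?_
  rw [norm_sub_rev]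
  exact mul_le_mul_of_nonneg_left (hXb y) (uw_nonneg U y)

end Op3

section Op4

variable (α k : ℝ) {U : ℝ → M3}
variable (hU : Continuous U) (hUint : ∀ i j : Fin 3, Integrable fun x => U x i j)

noncomputable def Top (X : BoundedContinuousFunction ℝ M3) : BoundedContinuousFunction ℝ M3 :=
  BoundedContinuousFunction.ofNormedAddCommGroup (TX α k U X)
    (TX_cont hU hUint X.continuous fun y => X.norm_coe_le_norm y)
    (‖(1 : M3)‖ + (∫ y, uw U y) * ‖X‖)
    (TX_norm_le hU hUint X.continuous fun y => X.norm_coe_le_norm y)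

theorem Top_apply (X : BoundedContinuousFunction ℝ M3) (x : ℝ) :
    Top α k hU hUint X x = TX α k U X x := rfl

theorem iterate_bound (n : ℕ) (X X' : BoundedContinuousFunction ℝ M3) (x : ℝ) :
    ‖(Top α k hU hUint)^[n] X x - (Top α k hU hUint)^[n] X' x‖ ≤
      phi (uw U) x ^ n / n.factorial * dist X X' := by
  induction n generalizing x with
  | zero =>
    simp only [Function.iterate_zero, id_eq, pow_zero, Nat.factorial_zero, Nat.cast_one,
      div_one, one_mul]
    rw [← dist_eq_norm]
    exact BoundedContinuousFunction.dist_coe_le_dist x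
  | succ n ih =>
    set A := (Top α k hU hUint)^[n] X with hA
    set A' := (Top α k hU hUint)^[n] X' with hA'
    have hiter : ∀ Z : BoundedContinuousFunction ℝ M3,
        (Top α k hU hUint)^[n+1] Z = Top α k hU hUint ((Top α k hU hUint)^[n] Z) := fun Z =>
      Function.iterate_succ_apply' _ n Z
    rw [hiter X, hiter X']
    have hub : Integrable fun y => uw U y *
        (phi (uw U) y ^ n / n.factorial * dist X X') := by
      have h1 := (integrable_phi_pow_mul (uw_int U hUint) (uw_cont U hU) (uw_nonneg U) n).mul_const
        (dist X X' / n.factorial)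
      apply h1.congr
      filter_upwards with y
      ring
    have hbd := TX_diff_norm_le (α := α) (k := k) hU hUint A.continuous A'.continuous
      (fun y => A.norm_coe_le_norm y) (fun y => A'.norm_coe_le_norm y)
      (b := fun y => phi (uw U) y ^ n / n.factorial * dist X X') (fun y => ih y) hub x
    refine (Top_apply α k hU hUint A x ▸ Top_apply α k hU hUint A' x ▸ hbd).trans ?_
    have heq : ∀ y : ℝ, uw U y * (phi (uw U) y ^ n / n.factorial * dist X X') =
        (phi (uw U) y ^ n * uw U y) * (dist X X' / n.factorial) := fun y => by ring
    rw [setIntegral_congr_fun measurableSet_Ioi fun y _ => heq y, integral_mul_const,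
      integral_u_phi_pow (uw_int U hUint) (uw_cont U hU) (uw_nonneg U) n x]
    apply le_of_eq
    rw [Nat.factorial_succ]
    have h0 : (0:ℝ) < n.factorial := by positivity
    push_cast
    field_simp

end Op4

section Main

variable (α k : ℝ) {U : ℝ → M3}
variable (hU : Continuous U) (hUint : ∀ i j : Fin 3, Integrable fun x => U x i j)

theorem dist_iterate_le (n : ℕ) (X X' : BoundedContinuousFunction ℝ M3) :
    dist ((Top α k hU hUint)^[n] X) ((Top α k hU hUint)^[n] X') ≤
      (∫ y, uw U y) ^ n / n.factorial * dist X X' := by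
  have hμ : 0 ≤ ∫ y, uw U y := integral_nonneg (uw_nonneg U)
  have hnn : 0 ≤ (∫ y, uw U y) ^ n / n.factorial * dist X X' := by positivity
  rw [BoundedContinuousFunction.dist_le hnn]
  intro x
  rw [dist_eq_norm]
  refine (iterate_bound α k hU hUint n X X' x).trans ?_
  apply mul_le_mul_of_nonneg_right _ dist_nonneg
  exact (div_le_div_iff_of_pos_right (Nat.cast_pos.mpr n.factorial_pos)).mpr
    (pow_le_pow_left₀ (phi_nonneg (uw_int U hUint) (uw_nonneg U) x)
      (phi_le (uw_int U hUint) (uw_nonneg U) x) n)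

theorem exists_contraction : ∃ (n : ℕ) (K : NNReal),
    ContractingWith K ((Top α k hU hUint)^[n]) := by
  have htend := FloorSemiring.tendsto_pow_div_factorial_atTop (K := ℝ) (∫ y, uw U y)
  obtain ⟨n, hn⟩ := ((tendsto_order.1 htend).2 1 one_pos).exists
  refine ⟨n, Real.toNNReal ((∫ y, uw U y) ^ n / n.factorial), ?_, ?_⟩
  · exact_mod_cast Real.toNNReal_lt_one.2 hn
  · apply LipschitzWith.of_dist_le_mul
    intro X X'
    have hnn : 0 ≤ (∫ y, uw U y) ^ n / n.factorial := by
      have hμ : 0 ≤ ∫ y, uw U y := integral_nonneg (uw_nonneg U)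
      positivity
    rw [Real.coe_toNNReal _ hnn]
    exact dist_iterate_le α k hU hUint n X X'

end Main

end Stmt2Aux

attribute [local instance] Matrix.normedAddCommGroup

theorem stmt_2 (α : ℝ) (hα : 0 < α) (k : ℝ) (U : ℝ → Matrix (Fin 3) (Fin 3) ℂ)
    (hUcont : Continuous U)
    (hUint : ∀ i j : Fin 3, Integrable fun x => U x i j) :
    ∃! X : ℝ → Matrix (Fin 3) (Fin 3) ℂ,
      Continuous X ∧ (∃ C : ℝ, ∀ (x : ℝ) (i j : Fin 3), ‖X x i j‖ ≤ C) ∧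
        ∀ x : ℝ, X x = 1 - Matrix.of fun i j =>
          ∫ y in Set.Ioi x,
            (expSigma (Complex.I * k * ((x : ℂ) - (y : ℂ)) / (12 * α)) * (U y * X y) *
              expSigma (-(Complex.I * k * ((x : ℂ) - (y : ℂ)) / (12 * α)))) i j := by
  classical
  haveI : CompleteSpace (BoundedContinuousFunction ℝ Stmt2Aux.M3) :=
    @BoundedContinuousFunction.instCompleteSpace ℝ Stmt2Aux.M3 _ _
      (inferInstanceAs (CompleteSpace (Fin 3 → Fin 3 → ℂ)))
  obtain ⟨n, K, hfc⟩ := Stmt2Aux.exists_contraction α k hUcont hUint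
  have hfix : Function.IsFixedPt (Stmt2Aux.Top α k hUcont hUint)
      (hfc.fixedPoint (Stmt2Aux.Top α k hUcont hUint)^[n]) :=
    hfc.isFixedPt_fixedPoint_iterate
  set X₀ := hfc.fixedPoint (Stmt2Aux.Top α k hUcont hUint)^[n] with hX₀
  refine ⟨⇑X₀, ⟨X₀.continuous, ⟨‖X₀‖, ?_⟩, ?_⟩, ?_⟩
  · intro x i j
    exact ((X₀ x).norm_entry_le_entrywise_sup_norm).trans (X₀.norm_coe_le_norm x)
  · intro x
    exact (congrFun (congrArg DFunLike.coe hfix) x).symm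
  · rintro Y ⟨hYc, ⟨C, hYC⟩, hYeq⟩
    have hYb : ∀ x, ‖Y x‖ ≤ max C 0 := by
      intro x
      rw [Matrix.norm_le_iff (le_max_right C 0)]
      intro i j
      exact (hYC x i j).trans (le_max_left _ _)
    set Y₀ := BoundedContinuousFunction.ofNormedAddCommGroup Y hYc (max C 0) hYb with hY₀
    have hYfix : Function.IsFixedPt (Stmt2Aux.Top α k hUcont hUint) Y₀ := by
      exact BoundedContinuousFunction.ext fun x => (hYeq x).symm
    have hYX : Y₀ = X₀ := hfc.fixedPoint_unique (hYfix.iterate n)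
    exact congrArg DFunLike.coe hYX
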